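/- Let K and L be compact convex polytopes in finite-dimensional real vector spaces and let f : K → L be a surjective affine map. Then f is an open map (with respect to the subspace topologies on K and L). -/

import Mathlib

open Finset

/-- Conic Carathéodory: a nonnegative combination can be rewritten as a nonnegative
combination supported on a linearly independent subfamily. -/
private lemma conicCara {F : Type*} [AddCommGroup F] [Module ℝ F] {ι : Type*} [Fintype ι]
    [DecidableEq ι] (w : ι → F) :
    ∀ (n : ℕ) (s : Finset ι), s.card ≤ n → ∀ μ : ι → ℝ, (∀ i, 0 ≤ μ i) →
      (∀ i, μ i ≠ 0 → i ∈ s) →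
      ∃ (t : Finset ι) (ν : ι → ℝ), (∀ i, 0 ≤ ν i) ∧ (∀ i, ν i ≠ 0 → i ∈ t) ∧
        LinearIndependent ℝ (fun i : t => w i) ∧ ∑ i, ν i • w i = ∑ i, μ i • w i := by
  intro n
  induction n with
  | zero =>
    intro s hcard μ hμ0 hsupp
    have hs : s = ∅ := Finset.card_eq_zero.1 (Nat.le_zero.1 hcard)
    refine ⟨∅, μ, hμ0, by simpa [hs] using hsupp, ?_, rfl⟩
    have : IsEmpty ((∅ : Finset ι) : Type _) := ⟨fun i => (Finset.notMem_empty _ i.2)⟩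
    exact linearIndependent_empty_type
  | succ n ih =>
    intro s hcard μ hμ0 hsupp
    by_cases hli : LinearIndependent ℝ (fun i : s => w i)
    · exact ⟨s, μ, hμ0, hsupp, hli, rfl⟩
    obtain ⟨g, hg0, j, hgj⟩ := Fintype.not_linearIndependent_iff.1 hli
    set lam : ι → ℝ := fun i => if h : i ∈ s then g ⟨i, h⟩ else 0 with hlamdef
    have hlamval : ∀ i : s, lam (i : ι) = g i := fun i => dif_pos i.2
    have hlamsupp : ∀ i, lam i ≠ 0 → i ∈ s := by
      intro i hi
      by_contra h
      exact hi (dif_neg h)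
    have hlamsum : ∑ i, lam i • w i = 0 := by
      rw [← hg0]
      rw [show (∑ i : s, g i • w (i : ι)) = ∑ i ∈ s.attach, g i • w (i : ι) from
        Finset.sum_congr (Finset.univ_eq_attach _) (fun _ _ => rfl)]
      rw [← Finset.sum_subset (Finset.subset_univ s)
        (fun i _ hi => by simp [hlamdef, dif_neg hi])]
      rw [← Finset.sum_attach s (fun i => lam i • w i)]
      exact Finset.sum_congr rfl (fun i _ => by rw [hlamval])
    -- pick a version of lam with a positive entry
    obtain ⟨l, hlsupp, hlsum, i₁, hi₁⟩ :
        ∃ l : ι → ℝ, (∀ i, l i ≠ 0 → i ∈ s) ∧ (∑ i, l i • w i = 0) ∧ ∃ i, 0 < l i := by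
      rcases hgj.lt_or_gt with h | h
      · refine ⟨fun i => -lam i, fun i hi => hlamsupp i (by simpa using hi), by
          simp only [neg_smul, Finset.sum_neg_distrib, hlamsum, neg_zero], ⟨j, ?_⟩⟩
        simp only [hlamval j]
        linarith
      · exact ⟨lam, hlamsupp, hlamsum, ⟨j, by rw [hlamval j]; exact h⟩⟩
    set P : Finset ι := s.filter (fun i => 0 < l i) with hPdef
    have hPne : P.Nonempty := ⟨i₁, Finset.mem_filter.2 ⟨hlsupp i₁ (ne_of_gt hi₁), hi₁⟩⟩
    obtain ⟨i₀, hi₀P, hri⟩ := Finset.exists_mem_eq_inf' hPne (fun i => μ i / l i)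
    set r : ℝ := P.inf' hPne (fun i => μ i / l i) with hrdef
    have hi₀pos : 0 < l i₀ := (Finset.mem_filter.1 hi₀P).2
    have hi₀s : i₀ ∈ s := (Finset.mem_filter.1 hi₀P).1
    have hr0 : 0 ≤ r := by
      rw [hri]
      exact div_nonneg (hμ0 i₀) hi₀pos.le
    set ν : ι → ℝ := fun i => μ i - r * l i with hνdef
    have hν0 : ∀ i, 0 ≤ ν i := by
      intro i
      by_cases hpos : 0 < l i
      · have hiP : i ∈ P := Finset.mem_filter.2 ⟨hlsupp i (ne_of_gt hpos), hpos⟩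
        have := Finset.inf'_le (fun i => μ i / l i) hiP
        have : r * l i ≤ μ i := (le_div_iff₀ hpos).1 this
        simp only [hνdef]; linarith
      · push_neg at hpos
        have : r * l i ≤ 0 := mul_nonpos_of_nonneg_of_nonpos hr0 hpos
        have := hμ0 i
        simp only [hνdef]; linarith
    have hνi₀ : ν i₀ = 0 := by
      simp only [hνdef, hri]
      field_simp
      ring
    have hνsupp : ∀ i, ν i ≠ 0 → i ∈ s.erase i₀ := by
      intro i hi
      refine Finset.mem_erase.2 ⟨?_, ?_⟩
      · rintro rfl; exact hi hνi₀
      · by_contra hns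
        have h1 : μ i = 0 := by
          by_contra h; exact hns (hsupp i h)
        have h2 : l i = 0 := by
          by_contra h; exact hns (hlsupp i h)
        exact hi (by simp [hνdef, h1, h2])
    have hνsum : ∑ i, ν i • w i = ∑ i, μ i • w i := by
      simp only [hνdef, sub_smul, mul_smul, Finset.sum_sub_distrib, ← Finset.smul_sum, hlsum,
        smul_zero, sub_zero]
    have hcard' : (s.erase i₀).card ≤ n := by
      have := Finset.card_erase_of_mem hi₀s
      omega
    obtain ⟨t, ν', h1, h2, h3, h4⟩ := ih (s.erase i₀) hcard' ν hν0 hνsupp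
    exact ⟨t, ν', h1, h2, h3, h4.trans hνsum⟩

/-- For a finite family `w`, there is a uniform constant `C` such that every nonnegative
combination of the `w i` can be rewritten with total weight at most `C` times the norm. -/
private lemma conicBound {F : Type*} [NormedAddCommGroup F] [NormedSpace ℝ F] {ι : Type*}
    [Fintype ι] [DecidableEq ι] (w : ι → F) :
    ∃ C > 0, ∀ μ : ι → ℝ, (∀ i, 0 ≤ μ i) →
      ∃ ν : ι → ℝ, (∀ i, 0 ≤ ν i) ∧ ∑ i, ν i • w i = ∑ i, μ i • w i ∧
        ∑ i, ν i ≤ C * ‖∑ i, μ i • w i‖ := by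
  have pert : ∀ t : Finset ι, ∃ C : ℝ, 0 < C ∧
      (LinearIndependent ℝ (fun i : t => w i) → ∀ ν : ι → ℝ, (∀ i, 0 ≤ ν i) →
        (∀ i, ν i ≠ 0 → i ∈ t) → ∑ i, ν i ≤ C * ‖∑ i, ν i • w i‖) := by
    intro t
    by_cases hli : LinearIndependent ℝ (fun i : t => w i)
    swap
    · exact ⟨1, one_pos, fun h => absurd h hli⟩
    rcases t.eq_empty_or_nonempty with rfl | htne
    · refine ⟨1, one_pos, fun _ ν hν0 hsupp => ?_⟩
      have : ∀ i, ν i = 0 := by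
        intro i
        by_contra h
        exact Finset.notMem_empty i (hsupp i h)
      simp [this]
    · have : Nonempty ↥t := ⟨⟨htne.choose, htne.choose_spec⟩⟩
      -- minimum of the norm on the standard simplex
      have hcont : Continuous fun g : ↥t → ℝ => ‖∑ i : t, g i • w (i : ι)‖ := by
        refine (continuous_finset_sum _ (fun i _ => ?_)).norm
        exact (continuous_apply i).smul continuous_const
      have hne : (stdSimplex ℝ ↥t).Nonempty := by
        refine ⟨fun _ => 1 / Fintype.card ↥t, fun i => by positivity, ?_⟩
        simp [Finset.sum_const, Finset.card_univ]
        field_simp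
      obtain ⟨gm, hgm, hmin⟩ :=
        (isCompact_stdSimplex ℝ ↥t).exists_isMinOn hne hcont.continuousOn
      set m : ℝ := ‖∑ i : t, gm i • w (i : ι)‖ with hmdef
      have hm0 : 0 < m := by
        rcases eq_or_lt_of_le (norm_nonneg (∑ i : t, gm i • w (i : ι))) with h | h
        · exfalso
          have hz : ∑ i : t, gm i • w (i : ι) = 0 := norm_eq_zero.1 h.symm
          have := Fintype.linearIndependent_iff.1 hli gm hz
          have hsum1 := hgm.2
          rw [Finset.sum_congr rfl (fun i _ => this i)] at hsum1
          simp at hsum1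
        · exact h
      refine ⟨1 / m, by positivity, fun _ ν hν0 hsupp => ?_⟩
      have hrestr : ∑ i, ν i = ∑ i ∈ t, ν i :=
        (Finset.sum_subset (Finset.subset_univ t) (fun i _ hi => by
          by_contra h; exact hi (hsupp i h))).symm
      have hrestr2 : ∑ i, ν i • w i = ∑ i ∈ t, ν i • w i :=
        (Finset.sum_subset (Finset.subset_univ t) (fun i _ hi => by
          have : ν i = 0 := by by_contra h; exact hi (hsupp i h)
          simp [this])).symm
      set σ : ℝ := ∑ i, ν i with hσdef
      have hσ0 : 0 ≤ σ := Finset.sum_nonneg (fun i _ => hν0 i)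
      rcases eq_or_lt_of_le hσ0 with h | h
      · rw [← h]
        positivity
      · -- normalize
        have hmem : (fun i : t => ν (i : ι) / σ) ∈ stdSimplex ℝ ↥t := by
          constructor
          · intro i
            exact div_nonneg (hν0 i) hσ0
          · rw [← Finset.sum_div]
            rw [Finset.sum_coe_sort t (fun i => ν i)]
            rw [← hrestr]
            exact div_self (ne_of_gt h)
        have hm : m ≤ ‖∑ i : ↥t, (ν (i : ι) / σ) • w (i : ι)‖ := hmin hmem
        have hval : ∑ i : t, (ν (i : ι) / σ) • w (i : ι) = σ⁻¹ • ∑ i, ν i • w i := by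
          rw [hrestr2, ← Finset.sum_coe_sort t (fun i => ν i • w i), Finset.smul_sum]
          exact Finset.sum_congr rfl (fun i _ => by rw [div_eq_inv_mul, mul_smul])
        rw [hval] at hm
        have : m ≤ σ⁻¹ * ‖∑ i, ν i • w i‖ := by
          rwa [norm_smul, Real.norm_eq_abs, abs_of_pos (inv_pos.2 h)] at hm
        rw [div_mul_eq_mul_div, le_div_iff₀ hm0, one_mul]
        calc σ * m ≤ σ * (σ⁻¹ * ‖∑ i, ν i • w i‖) := by
              exact mul_le_mul_of_nonneg_left this hσ0
          _ = ‖∑ i, ν i • w i‖ := by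
              rw [← mul_assoc, mul_inv_cancel₀ (ne_of_gt h), one_mul]
  choose Cf hCf using pert
  have huniv : (Finset.univ : Finset (Finset ι)).Nonempty := ⟨∅, Finset.mem_univ _⟩
  set C : ℝ := Finset.univ.sup' huniv Cf with hCdef
  have hCpos : 0 < C := lt_of_lt_of_le (hCf ∅).1 (Finset.le_sup' Cf (Finset.mem_univ ∅))
  refine ⟨C, hCpos, fun μ hμ0 => ?_⟩
  obtain ⟨t, ν, hν0, hνsupp, hli, hνsum⟩ :=
    conicCara w (Finset.univ.card) Finset.univ (le_refl _) μ hμ0 (fun i _ => Finset.mem_univ i)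
  refine ⟨ν, hν0, hνsum, ?_⟩
  calc ∑ i, ν i ≤ Cf t * ‖∑ i, ν i • w i‖ := (hCf t).2 hli ν hν0 hνsupp
    _ ≤ C * ‖∑ i, μ i • w i‖ := by
        rw [hνsum]
        exact mul_le_mul_of_nonneg_right (Finset.le_sup' Cf (Finset.mem_univ t)) (norm_nonneg _)

/-- A polytope is locally radially star-shaped at each of its points: points of the polytope
close to `y` (relative to `t`) can be pushed away from `y` by a factor `t⁻¹`. -/
private lemma radial {F : Type*} [NormedAddCommGroup F] [NormedSpace ℝ F] (T : Finset F) {y : F}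
    (hy : y ∈ convexHull ℝ (T : Set F)) :
    ∃ ε > 0, ∀ z ∈ convexHull ℝ (T : Set F), ∀ t : ℝ, 0 < t → t ≤ 1 →
      ‖z - y‖ ≤ t * ε → y + t⁻¹ • (z - y) ∈ convexHull ℝ (T : Set F) := by
  classical
  set w : ↥T → F := fun i => (i : F) - y with hwdef
  obtain ⟨C, hC, hbound⟩ := conicBound w
  refine ⟨1 / C, by positivity, fun z hz t ht0 ht1 hclose => ?_⟩
  rw [Finset.convexHull_eq] at hz
  obtain ⟨d, hd0, hd1, hdz⟩ := hz
  -- z - y = ∑ d v • (v - y)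
  have hdz' : ∑ v ∈ T, d v • v = z := by
    rw [Finset.centerMass_eq_of_sum_1 _ _ hd1] at hdz
    simpa using hdz
  have hzy : ∑ i : T, d (i : F) • w i = z - y := by
    rw [hwdef]
    simp only [smul_sub]
    rw [Finset.sum_sub_distrib]
    rw [Finset.sum_coe_sort T (fun v => d v • v), Finset.sum_coe_sort T (fun v => d v • y)]
    rw [← Finset.sum_smul, hd1, one_smul, hdz']
  set μ : ↥T → ℝ := fun i => t⁻¹ * d (i : F) with hμdef
  have hμ0 : ∀ i, 0 ≤ μ i := fun i => mul_nonneg (by positivity) (hd0 _ i.2)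
  have hμsum : ∑ i : T, μ i • w i = t⁻¹ • (z - y) := by
    rw [← hzy, Finset.smul_sum]
    exact Finset.sum_congr rfl (fun i _ => by rw [hμdef]; rw [mul_smul])
  obtain ⟨ν, hν0, hνsum, hνle⟩ := hbound μ hμ0
  rw [hμsum] at hνsum hνle
  have hnorm : ‖t⁻¹ • (z - y)‖ ≤ 1 / C := by
    rw [norm_smul, norm_inv, Real.norm_eq_abs, abs_of_pos ht0, inv_mul_le_iff₀ ht0]
    exact hclose
  have hσ1 : ∑ i, ν i ≤ 1 := by
    calc ∑ i, ν i ≤ C * ‖t⁻¹ • (z - y)‖ := hνle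
      _ ≤ C * (1 / C) := mul_le_mul_of_nonneg_left hnorm hC.le
      _ = 1 := by field_simp
  set σ : ℝ := ∑ i, ν i with hσdef
  have hσ0 : 0 ≤ σ := Finset.sum_nonneg (fun i _ => hν0 i)
  -- y + t⁻¹(z-y) = (1-σ) • y + ∑ ν i • (i : F)
  have hrepr : y + t⁻¹ • (z - y) = (1 - σ) • y + ∑ i : T, ν i • (i : F) := by
    rw [← hνsum]
    simp only [hwdef, smul_sub, Finset.sum_sub_distrib, ← Finset.sum_smul, ← hσdef]
    module
  rw [hrepr]
  have hconv : Convex ℝ (convexHull ℝ (T : Set F)) := convex_convexHull ℝ _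
  -- use Convex.sum_mem on Option T
  have : ((1 - σ) • y + ∑ i : T, ν i • (i : F)) =
      ∑ o : Option ↥T, (Option.elim o (1 - σ) ν) • (Option.elim o y (fun i => (i : F))) := by
    rw [Fintype.sum_option]
    simp
  rw [this]
  refine hconv.sum_mem ?_ ?_ ?_
  · rintro (_ | i) _
    · simp only [Option.elim]
      linarith
    · exact hν0 i
  · rw [Fintype.sum_option]
    simp only [Option.elim]
    rw [← hσdef]
    ring
  · rintro (_ | i) _
    · exact hy
    · exact subset_convexHull ℝ _ (Finset.mem_coe.2 i.2)

theorem affine_surjection_of_polytopes_isOpenMap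
    {E F : Type*}
    [NormedAddCommGroup E] [NormedSpace ℝ E] [FiniteDimensional ℝ E]
    [NormedAddCommGroup F] [NormedSpace ℝ F] [FiniteDimensional ℝ F]
    (S : Finset E) (T : Finset F)
    (f : (convexHull ℝ (S : Set E)) → (convexHull ℝ (T : Set F)))
    (haff : ∀ (x y : (convexHull ℝ (S : Set E))) (t : ℝ) (ht0 : 0 ≤ t) (ht1 : t ≤ 1),
      (f ⟨t • (x : E) + (1 - t) • (y : E),
          (convex_convexHull ℝ (S : Set E)) x.2 y.2 ht0 (by linarith) (by ring)⟩ : F)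
        = t • (f x : F) + (1 - t) • (f y : F))
    (hsurj : Function.Surjective f) :
    IsOpenMap f := by
  intro U hU
  rw [Metric.isOpen_iff]
  rintro b ⟨a, haU, rfl⟩
  obtain ⟨r, hr, hball⟩ := Metric.isOpen_iff.1 hU a haU
  set y : F := (f a : F) with hydef
  obtain ⟨ε, hε, hrad⟩ := radial T (f a).2
  -- bound on the diameter of K
  obtain ⟨D, hD⟩ := Metric.isBounded_iff.1
    ((Set.Finite.isCompact_convexHull (𝕜 := ℝ) (S.finite_toSet)).isBounded)
  have hD0 : 0 ≤ D := le_trans dist_nonneg (hD a.2 a.2)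
  set δ : ℝ := min (ε / 2) (ε * r / (2 * (D + 1))) with hδdef
  have hδ0 : 0 < δ := by
    apply lt_min
    · positivity
    · positivity
  refine ⟨δ, hδ0, ?_⟩
  intro b' hb'
  have hdist : ‖(b' : F) - y‖ < δ := by
    rw [Metric.mem_ball, Subtype.dist_eq, dist_eq_norm] at hb'
    exact hb'
  by_cases hu : (b' : F) = y
  · exact ⟨a, haU, Subtype.ext hu.symm⟩
  · set t : ℝ := ‖(b' : F) - y‖ / ε with htdef
    have hunorm : 0 < ‖(b' : F) - y‖ := norm_pos_iff.2 (sub_ne_zero.2 hu)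
    have ht0 : 0 < t := div_pos hunorm hε
    have ht1 : t ≤ 1 := by
      have : ‖(b' : F) - y‖ < ε / 2 := lt_of_lt_of_le hdist (min_le_left _ _)
      rw [htdef, div_le_one hε]
      linarith
    have hz := hrad (b' : F) b'.2 t ht0 ht1 (by rw [htdef]; field_simp; exact le_rfl)
    obtain ⟨xz, hxz⟩ := hsurj ⟨y + t⁻¹ • ((b' : F) - y), hz⟩
    have key := haff xz a t ht0.le ht1
    rw [hxz, ← hydef] at key
    have hval : t • ((y + t⁻¹ • ((b' : F) - y) : F)) + (1 - t) • y = (b' : F) := by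
      rw [smul_add, smul_smul, mul_inv_cancel₀ (ne_of_gt ht0), one_smul]
      module
    rw [hval] at key
    set x' : (convexHull ℝ (S : Set E)) := ⟨t • (xz : E) + (1 - t) • (a : E),
      (convex_convexHull ℝ (S : Set E)) xz.2 a.2 ht0.le (by linarith) (by ring)⟩ with hx'def
    refine ⟨x', hball ?_, Subtype.ext key⟩
    rw [Metric.mem_ball, Subtype.dist_eq, hx'def]
    have hdist' : dist (t • (xz : E) + (1 - t) • (a : E)) (a : E) = t * dist (xz : E) (a : E) := by
      rw [dist_eq_norm, dist_eq_norm]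
      have : t • (xz : E) + (1 - t) • (a : E) - (a : E) = t • ((xz : E) - (a : E)) := by module
      rw [this, norm_smul, Real.norm_eq_abs, abs_of_pos ht0]
    rw [hdist']
    have hxzd : dist (xz : E) (a : E) ≤ D := hD xz.2 a.2
    have htsmall : t < r / (2 * (D + 1)) := by
      have h1 : ‖(b' : F) - y‖ < ε * r / (2 * (D + 1)) := lt_of_lt_of_le hdist (min_le_right _ _)
      rw [htdef, div_lt_iff₀ hε]
      calc ‖(b' : F) - y‖ < ε * r / (2 * (D + 1)) := h1
        _ = r / (2 * (D + 1)) * ε := by ring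
    calc t * dist (xz : E) (a : E) ≤ t * (D + 1) := by
          apply mul_le_mul_of_nonneg_left _ ht0.le
          linarith
      _ < r / (2 * (D + 1)) * (D + 1) := by
          apply mul_lt_mul_of_pos_right htsmall
          linarith
      _ = r / 2 := by field_simp
      _ < r := by linarith
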